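/- For every integer ℓ ≥ 1, the function a ↦ G²_ℓ(a) is strictly convex on [ℓw, 4ℓ], and for every v ∈ ℝ the function a ↦ −v·a + G²_ℓ(a) attains its minimum on [ℓw, 4ℓ] at a unique point a_ℓ(v). Moreover, if v ≤ 1 + ℓw/σ then a_ℓ(v) = ℓw, while if v > 1 + ℓw/σ then a_ℓ(v) is the unique solution a ∈ (ℓw, 4ℓ) of the equation v = √((4−w)/(4−a/ℓ)) + a/σ. -/

import Mathlib

/-- Surface tension of the type-2 stack of `ℓ` layers and area `a`:
`τ²_ℓ(a) = 8ℓ − 2√((4ℓ−a)(4−w)ℓ)`. -/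
noncomputable def tau2 (w : ℝ) (ℓ : ℕ) (a : ℝ) : ℝ :=
  8 * (ℓ : ℝ) - 2 * Real.sqrt ((4 * (ℓ : ℝ) - a) * ((4 - w) * (ℓ : ℝ)))

/-- `G²_ℓ(a) = τ²_ℓ(a) + a²/(2σ)` (the finite branch, relevant on `[ℓw, 4ℓ]`). -/
noncomputable def G2 (w σ : ℝ) (ℓ : ℕ) (a : ℝ) : ℝ :=
  tau2 w ℓ a + a ^ 2 / (2 * σ)

noncomputable def hfun (w σ : ℝ) (ℓ : ℕ) (a : ℝ) : ℝ :=
  Real.sqrt ((4 - w) / (4 - a / (ℓ : ℝ))) + a / σ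

lemma key_id (w : ℝ) (hw4 : w < 4) (ℓ : ℕ) (hℓ : 1 ≤ ℓ) {x : ℝ} (hx : x < 4 * (ℓ : ℝ)) :
    (4 - w) * (ℓ : ℝ) / Real.sqrt ((4 * (ℓ : ℝ) - x) * ((4 - w) * (ℓ : ℝ))) =
    Real.sqrt ((4 - w) / (4 - x / (ℓ : ℝ))) := by
  have hℓ0 : (0:ℝ) < ℓ := by exact_mod_cast hℓ
  have hw : (0:ℝ) < 4 - w := by linarith
  have hc : (0:ℝ) < (4 - w) * ℓ := by positivity
  have h4x : (0:ℝ) < 4 * ℓ - x := by linarith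
  have hd : (0:ℝ) < 4 - x / ℓ := by
    have : x / ℓ < 4 := by rw [div_lt_iff₀ hℓ0]; linarith
    linarith
  have e1 : (4 - w) / (4 - x / (ℓ:ℝ)) = ((4 - w) * ℓ) ^ 2 / ((4 * ℓ - x) * ((4 - w) * ℓ)) := by
    field_simp
  rw [e1, Real.sqrt_div (by positivity), Real.sqrt_sq hc.le]

lemma G2_hasDerivAt (w σ : ℝ) (hw4 : w < 4) (hσ : 0 < σ) (ℓ : ℕ) (hℓ : 1 ≤ ℓ)
    {x : ℝ} (hx : x < 4 * (ℓ : ℝ)) :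
    HasDerivAt (G2 w σ ℓ) (hfun w σ ℓ x) x := by
  have hℓ0 : (0:ℝ) < ℓ := by exact_mod_cast hℓ
  have hw : (0:ℝ) < 4 - w := by linarith
  have hu : (0:ℝ) < (4 * (ℓ:ℝ) - x) * ((4 - w) * ℓ) :=
    mul_pos (by linarith) (by positivity)
  have hs : (0:ℝ) < Real.sqrt ((4 * (ℓ:ℝ) - x) * ((4 - w) * ℓ)) := Real.sqrt_pos.mpr hu
  have hu' : HasDerivAt (fun y : ℝ => (4 * (ℓ:ℝ) - y) * ((4 - w) * ℓ)) (-((4 - w) * ℓ)) x := by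
    simpa using ((hasDerivAt_id x).const_sub (4 * (ℓ:ℝ))).mul_const ((4 - w) * (ℓ:ℝ))
  have hsq : HasDerivAt (fun y : ℝ => Real.sqrt ((4 * (ℓ:ℝ) - y) * ((4 - w) * ℓ)))
      (1 / (2 * Real.sqrt ((4 * (ℓ:ℝ) - x) * ((4 - w) * ℓ))) * (-((4 - w) * ℓ))) x :=
    (Real.hasDerivAt_sqrt hu.ne').comp x hu'
  have h1 : HasDerivAt (fun y : ℝ => 8 * (ℓ:ℝ) - 2 * Real.sqrt ((4 * (ℓ:ℝ) - y) * ((4 - w) * ℓ)))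
      (-(2 * (1 / (2 * Real.sqrt ((4 * (ℓ:ℝ) - x) * ((4 - w) * ℓ))) * (-((4 - w) * ℓ))))) x :=
    (hsq.const_mul 2).const_sub (8 * (ℓ:ℝ))
  have h2 : HasDerivAt (fun y : ℝ => y ^ 2 / (2 * σ)) ((2 * x) / (2 * σ)) x := by
    simpa using (hasDerivAt_pow 2 x).div_const (2 * σ)
  have h3 : HasDerivAt (G2 w σ ℓ)
      (-(2 * (1 / (2 * Real.sqrt ((4 * (ℓ:ℝ) - x) * ((4 - w) * ℓ))) * (-((4 - w) * ℓ)))) +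
        (2 * x) / (2 * σ)) x := h1.add h2
  convert h3 using 1
  rw [hfun, ← key_id w hw4 ℓ hℓ hx]
  field_simp

lemma hfun_strictMono (w σ : ℝ) (hw4 : w < 4) (hσ : 0 < σ) (ℓ : ℕ) (hℓ : 1 ≤ ℓ) :
    StrictMonoOn (hfun w σ ℓ) (Set.Ico ((ℓ:ℝ) * w) (4 * (ℓ:ℝ))) := by
  have hℓ0 : (0:ℝ) < ℓ := by exact_mod_cast hℓ
  have hw : (0:ℝ) < 4 - w := by linarith
  intro x hx y hy hxy
  have hdy : (0:ℝ) < 4 - y / ℓ := by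
    have : y / ℓ < 4 := by rw [div_lt_iff₀ hℓ0]; linarith [hy.2]
    linarith
  have hdd : (4:ℝ) - y / ℓ ≤ 4 - x / ℓ := by
    have : x / ℓ ≤ y / ℓ := by gcongr
    linarith
  have h1 : Real.sqrt ((4 - w) / (4 - x / (ℓ:ℝ))) ≤ Real.sqrt ((4 - w) / (4 - y / (ℓ:ℝ))) := by
    apply Real.sqrt_le_sqrt
    gcongr
  have h2 : x / σ < y / σ := by gcongr
  simp only [hfun]
  linarith

lemma hfun_left (w σ : ℝ) (hw4 : w < 4) (ℓ : ℕ) (hℓ : 1 ≤ ℓ) :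
    hfun w σ ℓ ((ℓ:ℝ) * w) = 1 + (ℓ:ℝ) * w / σ := by
  have hℓ0 : (0:ℝ) < ℓ := by exact_mod_cast hℓ
  have hw : (0:ℝ) < 4 - w := by linarith
  have e : (ℓ:ℝ) * w / (ℓ:ℝ) = w := mul_div_cancel_left₀ w hℓ0.ne'
  rw [hfun, e, div_self hw.ne', Real.sqrt_one]

lemma G2_cont (w σ : ℝ) (ℓ : ℕ) : Continuous (G2 w σ ℓ) := by
  unfold G2 tau2
  fun_prop

lemma G2_strictConvexOn (w σ : ℝ) (hw4 : w < 4) (hσ : 0 < σ) (ℓ : ℕ) (hℓ : 1 ≤ ℓ) :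
    StrictConvexOn ℝ (Set.Icc ((ℓ:ℝ) * w) (4 * (ℓ:ℝ))) (G2 w σ ℓ) := by
  apply StrictMonoOn.strictConvexOn_of_deriv (convex_Icc _ _) (G2_cont w σ ℓ).continuousOn
  rw [interior_Icc]
  intro x hx y hy hxy
  rw [(G2_hasDerivAt w σ hw4 hσ ℓ hℓ hx.2).deriv, (G2_hasDerivAt w σ hw4 hσ ℓ hℓ hy.2).deriv]
  exact hfun_strictMono w σ hw4 hσ ℓ hℓ ⟨hx.1.le, hx.2⟩ ⟨hy.1.le, hy.2⟩ hxy

lemma unique_min {s : Set ℝ} (hs : Convex ℝ s) {F : ℝ → ℝ}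
    (hF : StrictConvexOn ℝ s F) (v : ℝ) {a b : ℝ} (ha : a ∈ s) (hb : b ∈ s)
    (hma : ∀ c ∈ s, -v * a + F a ≤ -v * c + F c)
    (hmb : ∀ c ∈ s, -v * b + F b ≤ -v * c + F c) : a = b := by
  by_contra hne
  have hmem : (1/2 : ℝ) • a + (1/2 : ℝ) • b ∈ s :=
    hs ha hb (by norm_num) (by norm_num) (by norm_num)
  have hsc := hF.2 ha hb hne (by norm_num : (0:ℝ) < 1/2) (by norm_num : (0:ℝ) < 1/2) (by norm_num)
  have h1 := hma _ hmem
  have h2 := hmb _ hmem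
  simp only [smul_eq_mul] at hsc h1 h2
  linarith

/-- for every integer `ℓ ≥ 1`, `G²_ℓ` is strictly convex on `[ℓw, 4ℓ]`;
for every `v` the function `a ↦ −v·a + G²_ℓ(a)` has a unique minimizer `a_ℓ(v)` on
`[ℓw, 4ℓ]`; if `v ≤ 1 + ℓw/σ` the minimizer is `ℓw`, and if `v > 1 + ℓw/σ` the
minimizer is the unique solution `a ∈ (ℓw, 4ℓ)` of `v = √((4−w)/(4−a/ℓ)) + a/σ`. -/
theorem G2_strictConvex_unique_minimizer (w σ : ℝ) (hw0 : 0 < w) (hw4 : w < 4)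
    (hσ : 0 < σ) (hnd : ∀ n : ℕ, (n : ℝ) ≠ 4 / (4 - w)) (ℓ : ℕ) (hℓ : 1 ≤ ℓ) :
    StrictConvexOn ℝ (Set.Icc ((ℓ : ℝ) * w) (4 * (ℓ : ℝ))) (G2 w σ ℓ) ∧
    (∀ v : ℝ, ∃! a : ℝ, a ∈ Set.Icc ((ℓ : ℝ) * w) (4 * (ℓ : ℝ)) ∧
        ∀ b ∈ Set.Icc ((ℓ : ℝ) * w) (4 * (ℓ : ℝ)),
          -v * a + G2 w σ ℓ a ≤ -v * b + G2 w σ ℓ b) ∧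
    (∀ v : ℝ, v ≤ 1 + (ℓ : ℝ) * w / σ →
        ∀ b ∈ Set.Icc ((ℓ : ℝ) * w) (4 * (ℓ : ℝ)),
          -v * ((ℓ : ℝ) * w) + G2 w σ ℓ ((ℓ : ℝ) * w) ≤ -v * b + G2 w σ ℓ b) ∧
    (∀ v : ℝ, 1 + (ℓ : ℝ) * w / σ < v →
        ∃ a : ℝ, a ∈ Set.Ioo ((ℓ : ℝ) * w) (4 * (ℓ : ℝ)) ∧
          v = Real.sqrt ((4 - w) / (4 - a / (ℓ : ℝ))) + a / σ ∧
          (∀ b ∈ Set.Icc ((ℓ : ℝ) * w) (4 * (ℓ : ℝ)),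
            -v * a + G2 w σ ℓ a ≤ -v * b + G2 w σ ℓ b) ∧
          (∀ a' ∈ Set.Ioo ((ℓ : ℝ) * w) (4 * (ℓ : ℝ)),
            v = Real.sqrt ((4 - w) / (4 - a' / (ℓ : ℝ))) + a' / σ → a' = a)) := by
  have hℓ0 : (0:ℝ) < ℓ := by exact_mod_cast hℓ
  have hw : (0:ℝ) < 4 - w := by linarith
  set A : ℝ := (ℓ:ℝ) * w with hA
  set B : ℝ := 4 * (ℓ:ℝ) with hB
  have hAB : A < B := by rw [hA, hB]; nlinarith
  have hA0 : 0 < A := by positivity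
  have hsc := G2_strictConvexOn w σ hw4 hσ ℓ hℓ
  have hcontf : ∀ v : ℝ, Continuous (fun a => -v * a + G2 w σ ℓ a) := fun v =>
    (continuous_const.mul continuous_id).add (G2_cont w σ ℓ)
  have hderiv : ∀ v : ℝ, ∀ x : ℝ, x < B →
      HasDerivAt (fun y => -v * y + G2 w σ ℓ y) (-v + hfun w σ ℓ x) x := by
    intro v x hx
    have := ((hasDerivAt_id x).const_mul (-v)).add (G2_hasDerivAt w σ hw4 hσ ℓ hℓ hx)
    simpa [Pi.add_def] using this
  refine ⟨hsc, ?_, ?_, ?_⟩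
  · intro v
    obtain ⟨a, ha, hmin⟩ := isCompact_Icc.exists_isMinOn ⟨A, Set.left_mem_Icc.mpr hAB.le⟩
      (hcontf v).continuousOn
    refine ⟨a, ⟨ha, fun b hb => isMinOn_iff.mp hmin b hb⟩, ?_⟩
    rintro a' ⟨ha', hmin'⟩
    exact unique_min (convex_Icc A B) hsc v ha' ha hmin' (fun c hc => isMinOn_iff.mp hmin c hc)
  · intro v hv b hb
    have hmono : StrictMonoOn (fun y => -v * y + G2 w σ ℓ y) (Set.Icc A B) := by
      apply strictMonoOn_of_deriv_pos (convex_Icc A B) (hcontf v).continuousOn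
      rw [interior_Icc]
      intro x hx
      rw [(hderiv v x hx.2).deriv]
      have h1 : hfun w σ ℓ A < hfun w σ ℓ x :=
        hfun_strictMono w σ hw4 hσ ℓ hℓ ⟨le_refl A, hAB⟩ ⟨hx.1.le, hx.2⟩ hx.1
      rw [hA, hfun_left w σ hw4 ℓ hℓ] at h1
      rw [hA] at hv
      linarith
    rcases eq_or_lt_of_le hb.1 with h | h
    · rw [← h]
    · exact (hmono (Set.left_mem_Icc.mpr hAB.le) hb h).le
  · intro v hv
    have hv1 : 1 < v := by
      have : 0 < A / σ := by positivity
      linarith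
    have hv0 : 0 < v := by linarith
    have hv2 : 1 < v ^ 2 := by nlinarith
    set b₀ : ℝ := (ℓ:ℝ) * (4 - (4 - w) / v ^ 2) with hb₀
    have hb₀B : b₀ < B := by
      have h1 : 0 < (4 - w) / v ^ 2 := by positivity
      rw [hb₀, hB]; nlinarith
    have hAb₀ : A < b₀ := by
      have h1 : (4 - w) / v ^ 2 < 4 - w := div_lt_self hw hv2
      rw [hA, hb₀]; nlinarith
    have he : 4 - b₀ / (ℓ:ℝ) = (4 - w) / v ^ 2 := by
      rw [hb₀, mul_div_cancel_left₀ _ hℓ0.ne']; ring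
    have hhb₀ : hfun w σ ℓ b₀ = v + b₀ / σ := by
      rw [hfun, he, div_div_eq_mul_div, mul_comm, mul_div_assoc, div_self hw.ne', mul_one,
        Real.sqrt_sq hv0.le]
    have hconth : ContinuousOn (hfun w σ ℓ) (Set.Icc A b₀) := by
      apply ContinuousOn.add
      · apply Real.continuous_sqrt.comp_continuousOn
        apply ContinuousOn.div continuousOn_const (by fun_prop)
        intro x hx
        have hxb : x ≤ b₀ := hx.2
        have hxB : x < B := lt_of_le_of_lt hxb hb₀B
        rw [hB] at hxB
        have : x / (ℓ:ℝ) < 4 := by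
          rw [div_lt_iff₀ hℓ0]
          linarith
        exact ne_of_gt (by linarith)
      · fun_prop
    have hvmem : v ∈ Set.Icc (hfun w σ ℓ A) (hfun w σ ℓ b₀) := by
      constructor
      · rw [hA, hfun_left w σ hw4 ℓ hℓ]
        rw [hA] at hv
        exact hv.le
      · rw [hhb₀]
        have h2 : 0 < b₀ / σ := by
          have : 0 < b₀ := lt_trans hA0 hAb₀
          positivity
        linarith
    obtain ⟨a, haI, hav⟩ := intermediate_value_Icc hAb₀.le hconth hvmem
    have haB : a < B := lt_of_le_of_lt haI.2 hb₀B
    have haA : A < a := by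
      rcases eq_or_lt_of_le haI.1 with h | h
      · exfalso
        rw [← h, hA, hfun_left w σ hw4 ℓ hℓ] at hav
        rw [hA] at hv
        rw [hav] at hv
        exact lt_irrefl _ hv
      · exact h
    have haIoo : a ∈ Set.Ioo A B := ⟨haA, haB⟩
    have haIco : a ∈ Set.Ico A B := ⟨haA.le, haB⟩
    refine ⟨a, haIoo, ?_, ?_, ?_⟩
    · rw [← hav]; rfl
    · have hanti : StrictAntiOn (fun y => -v * y + G2 w σ ℓ y) (Set.Icc A a) := by
        apply strictAntiOn_of_deriv_neg (convex_Icc A a) (hcontf v).continuousOn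
        rw [interior_Icc]
        intro x hx
        rw [(hderiv v x (lt_trans hx.2 haB)).deriv]
        have h1 : hfun w σ ℓ x < hfun w σ ℓ a :=
          hfun_strictMono w σ hw4 hσ ℓ hℓ ⟨hx.1.le, lt_trans hx.2 haB⟩ haIco hx.2
        rw [hav] at h1
        linarith
      have hmono : StrictMonoOn (fun y => -v * y + G2 w σ ℓ y) (Set.Icc a B) := by
        apply strictMonoOn_of_deriv_pos (convex_Icc a B) (hcontf v).continuousOn
        rw [interior_Icc]
        intro x hx
        rw [(hderiv v x hx.2).deriv]
        have h1 : hfun w σ ℓ a < hfun w σ ℓ x :=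
          hfun_strictMono w σ hw4 hσ ℓ hℓ haIco ⟨(haA.trans hx.1).le, hx.2⟩ hx.1
        rw [hav] at h1
        linarith
      intro b hb
      rcases le_or_gt b a with h | h
      · rcases eq_or_lt_of_le h with rfl | hlt
        · exact le_refl _
        · exact (hanti ⟨hb.1, h⟩ ⟨haA.le, le_refl a⟩ hlt).le
      · exact (hmono ⟨le_refl a, haB.le⟩ ⟨h.le, hb.2⟩ h).le
    · intro a' ha' heq
      apply (hfun_strictMono w σ hw4 hσ ℓ hℓ).injOn ⟨ha'.1.le, ha'.2⟩ haIco
      rw [hav, hfun, ← heq]
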